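/- arXiv:2202.05604 — 5 statements merged into one kernel-verified Lean document; each statement's English description precedes it below -/
import Mathlib

section
/- If x : [0,T] → ℝ² is Lipschitz continuous and x(t₀) = 0 for some t₀ ∈ [0,T], then ∫₀ᵀ α/|x(t)| dt = +∞ for any α > 0. -/
open MeasureTheory

lemma lintegral_inv_abs_sub_eq_top (T : ℝ) (hT : 0 < T) (t₀ : ℝ) (ht₀ : t₀ ∈ Set.Icc 0 T) :
    ∫⁻ t in Set.Icc 0 T, (ENNReal.ofReal |t - t₀|)⁻¹ = ⊤ := by
  by_contra h
  have hlt : ∫⁻ t in Set.Icc 0 T, (ENNReal.ofReal |t - t₀|)⁻¹ < ⊤ := lt_top_iff_ne_top.2 h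
  have hne : ∀ᵐ t ∂(volume.restrict (Set.Icc 0 T)), t ≠ t₀ := by
    refine ae_restrict_of_ae ?_
    rw [ae_iff]
    have : {a : ℝ | ¬ a ≠ t₀} = {t₀} := by ext a; simp
    rw [this]
    exact measure_singleton t₀
  have hint : IntegrableOn (fun t => (t - t₀)⁻¹) (Set.Icc 0 T) := by
    constructor
    · exact ((measurable_id.sub_const t₀).inv).aestronglyMeasurable
    · show ∫⁻ t in Set.Icc 0 T, (‖(t - t₀)⁻¹‖₊ : ENNReal) < ⊤
      have heq : ∫⁻ t in Set.Icc 0 T, (‖(t - t₀)⁻¹‖₊ : ENNReal)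
          = ∫⁻ t in Set.Icc 0 T, (ENNReal.ofReal |t - t₀|)⁻¹ := by
        refine lintegral_congr_ae ?_
        filter_upwards [hne] with t ht
        have hpos : 0 < |t - t₀| := abs_pos.2 (sub_ne_zero.2 ht)
        rw [← ENNReal.ofReal_coe_nnreal, coe_nnnorm, Real.norm_eq_abs, abs_inv,
          ENNReal.ofReal_inv_of_pos hpos]
      rw [heq]
      exact hlt
  have hii : IntervalIntegrable (fun t => (t - t₀)⁻¹) volume 0 T :=
    (intervalIntegrable_iff_integrableOn_Icc_of_le hT.le).2 hint
  rcases intervalIntegrable_sub_inv_iff.1 hii with h0 | h0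
  · exact hT.ne h0
  · exact h0 (by rwa [Set.uIcc_of_le hT.le])

/-- If `x : [0,T] → ℝ²` is Lipschitz continuous and vanishes at some `t₀ ∈ [0,T]`, then
`∫₀ᵀ α/‖x(t)‖ dt = +∞` (as a Lebesgue integral with values in `[0,∞]`). -/
theorem integral_inv_norm_of_lipschitz_vanishing (T α K : ℝ) (hT : 0 < T) (hα : 0 < α)
    (x : ℝ → EuclideanSpace ℝ (Fin 2))
    (hx : LipschitzOnWith (Real.toNNReal K) x (Set.Icc 0 T))
    (t₀ : ℝ) (ht₀ : t₀ ∈ Set.Icc 0 T) (hx0 : x t₀ = 0) :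
    ∫⁻ t in Set.Icc 0 T, ENNReal.ofReal α / ENNReal.ofReal ‖x t‖ = ⊤ := by
  set M : ℝ := max K 1 with hM
  have hM1 : (1 : ℝ) ≤ M := le_max_right _ _
  have hMpos : 0 < M := lt_of_lt_of_le one_pos hM1
  have hKM : (K.toNNReal : ℝ) ≤ M := by
    rw [Real.coe_toNNReal']
    exact max_le (le_max_left _ _) (le_trans zero_le_one (le_max_right K 1))
  set c : ENNReal := ENNReal.ofReal (α / M) with hc
  have hc0 : c ≠ 0 := by
    simp [hc, ENNReal.ofReal_eq_zero, not_le, div_pos hα hMpos]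
  have hcT : c ≠ ⊤ := ENNReal.ofReal_ne_top
  have hmeas : Measurable (fun t : ℝ => (ENNReal.ofReal |t - t₀|)⁻¹) :=
    (ENNReal.measurable_ofReal.comp (measurable_id.sub_const t₀).abs).inv
  have hbound : ∀ᵐ t ∂(volume.restrict (Set.Icc 0 T)),
      c * (ENNReal.ofReal |t - t₀|)⁻¹ ≤ ENNReal.ofReal α / ENNReal.ofReal ‖x t‖ := by
    filter_upwards [ae_restrict_mem measurableSet_Icc] with t ht
    have hnorm : ‖x t‖ ≤ M * |t - t₀| := by
      have hd : dist (x t) (x t₀) ≤ (K.toNNReal : ℝ) * dist t t₀ := hx.dist_le_mul t ht t₀ ht₀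
      rw [hx0, dist_zero_right, Real.dist_eq] at hd
      exact hd.trans (mul_le_mul_of_nonneg_right hKM (abs_nonneg _))
    have h1 : ENNReal.ofReal ‖x t‖ ≤ ENNReal.ofReal M * ENNReal.ofReal |t - t₀| := by
      rw [← ENNReal.ofReal_mul hMpos.le]
      exact ENNReal.ofReal_le_ofReal hnorm
    calc c * (ENNReal.ofReal |t - t₀|)⁻¹
        = ENNReal.ofReal α / (ENNReal.ofReal M * ENNReal.ofReal |t - t₀|) := by
          rw [hc, ENNReal.ofReal_div_of_pos hMpos, div_eq_mul_inv, div_eq_mul_inv,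
            ENNReal.mul_inv (Or.inr ENNReal.ofReal_ne_top) (Or.inl ENNReal.ofReal_ne_top),
            mul_assoc]
      _ ≤ ENNReal.ofReal α / ENNReal.ofReal ‖x t‖ :=
          ENNReal.div_le_div_left h1 _
  rw [eq_top_iff]
  calc (⊤ : ENNReal) = c * ∫⁻ t in Set.Icc 0 T, (ENNReal.ofReal |t - t₀|)⁻¹ := by
        rw [lintegral_inv_abs_sub_eq_top T hT t₀ ht₀, ENNReal.mul_top hc0]
    _ = ∫⁻ t in Set.Icc 0 T, c * (ENNReal.ofReal |t - t₀|)⁻¹ :=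
        (lintegral_const_mul c hmeas).symm
    _ ≤ ∫⁻ t in Set.Icc 0 T, ENNReal.ofReal α / ENNReal.ofReal ‖x t‖ :=
        lintegral_mono_ae hbound
end

section
/- Suppose u solves d/dt(φ(u̇)) = f(t) on [0,T] with periodic boundary conditions u(0)=u(T), u̇(0)=u̇(T), where φ = ∇F and F is convex. Then u is a global minimum of J(v) = ∫₀ᵀ F(v̇) dt + ∫₀ᵀ ⟨f, v⟩ dt over all T-periodic Lipschitz v with ‖v̇‖_∞ ≤ c. -/
open MeasureTheory intervalIntegral

local notation "E2" => EuclideanSpace ℝ (Fin 2)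

section Helpers
open Filter

set_option maxHeartbeats 1000000

/-- FTC for globally Lipschitz functions. -/
lemma lipschitz_ftc {C : NNReal} {g : ℝ → E2} (hg : LipschitzWith C g) {a b : ℝ} (hab : a ≤ b) :
    ∫ t in a..b, deriv g t = g b - g a := by
  have hgc : Continuous g := hg.continuous
  set h : ℕ → ℝ := fun n => 1 / (n + 1) with hh
  have hpos : ∀ n, 0 < h n := fun n => by positivity
  have hlim : Tendsto h atTop (nhds 0) := tendsto_one_div_add_atTop_nhds_zero_nat
  set D : ℕ → ℝ → E2 := fun n t => (h n)⁻¹ • (g (t + h n) - g t) with hD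
  have hslope : ∀ n t, D n t = slope g t (t + h n) := by
    intro n t
    simp [hD, slope_def_module, add_sub_cancel_left]
  -- auxiliary: sequence t + h n tends to 𝓝[≠] t
  have hseq : ∀ t : ℝ, Tendsto (fun n => t + h n) atTop (nhdsWithin t {t}ᶜ) := by
    intro t
    rw [tendsto_nhdsWithin_iff]
    constructor
    · simpa using tendsto_const_nhds.add hlim
    · filter_upwards with n
      simp [ne_of_gt (hpos n)]
  have key1 : Tendsto (fun n => ∫ t in a..b, D n t) atTop (nhds (∫ t in a..b, deriv g t)) := by
    apply intervalIntegral.tendsto_integral_filter_of_dominated_convergence (bound := fun _ => (C : ℝ))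
    · filter_upwards with n
      exact (((hgc.comp (continuous_id.add continuous_const)).sub hgc).const_smul (h n)⁻¹).aestronglyMeasurable
    · filter_upwards with n
      filter_upwards with t _
      have h1 : ‖g (t + h n) - g t‖ ≤ (C : ℝ) * h n := by
        have := hg.dist_le_mul (t + h n) t
        simpa [dist_eq_norm, abs_of_pos (hpos n)] using this
      have : ‖D n t‖ = (h n)⁻¹ * ‖g (t + h n) - g t‖ := by
        simp [hD, norm_smul, abs_of_pos (hpos n)]
      rw [this]
      rw [inv_mul_le_iff₀ (hpos n)]
      linarith [h1]
    · exact intervalIntegrable_const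
    · have hae := hg.ae_differentiableAt (μ := volume)
      filter_upwards [hae] with t ht _
      have hd : HasDerivAt g (deriv g t) t := ht.hasDerivAt
      rw [hasDerivAt_iff_tendsto_slope] at hd
      have := hd.comp (hseq t)
      simpa [hslope, Function.comp_def] using this
  have key2 : Tendsto (fun n => ∫ t in a..b, D n t) atTop (nhds (g b - g a)) := by
    have hint : ∀ p q : ℝ, IntervalIntegrable g volume p q := fun p q => hgc.intervalIntegrable p q
    have heq : ∀ n, ∫ t in a..b, D n t
        = (h n)⁻¹ • ((∫ t in b..(b + h n), g t) - ∫ t in a..(a + h n), g t) := by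
      intro n
      have i0 : ∫ t in a..b, D n t = (h n)⁻¹ • ∫ t in a..b, (g (t + h n) - g t) := by
        rw [← intervalIntegral.integral_smul]
      have i1 : ∫ t in a..b, (g (t + h n) - g t)
          = (∫ t in b..(b + h n), g t) - ∫ t in a..(a + h n), g t := by
        rw [intervalIntegral.integral_sub ((by fun_prop : Continuous fun t : ℝ => g (t + h n)).intervalIntegrable _ _) (hint a b)]
        rw [intervalIntegral.integral_comp_add_right]
        have e1 : (∫ t in a..(a + h n), g t) + ∫ t in (a + h n)..(b + h n), g t
            = ∫ t in a..(b + h n), g t := intervalIntegral.integral_add_adjacent_intervals (hint _ _) (hint _ _)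
        have e2 : (∫ t in a..b, g t) + ∫ t in b..(b + h n), g t
            = ∫ t in a..(b + h n), g t := intervalIntegral.integral_add_adjacent_intervals (hint _ _) (hint _ _)
        have := e1.trans e2.symm
        abel_nf
        abel_nf at this
        linear_combination (norm := abel1) this
      rw [i0, i1]
    rw [funext heq]
    -- slope of primitives
    have prim : ∀ p : ℝ, Tendsto (fun n => (h n)⁻¹ • ∫ t in p..(p + h n), g t) atTop (nhds (g p)) := by
      intro p
      have hp : HasDerivAt (fun x => ∫ t in p..x, g t) (g p) p :=
        intervalIntegral.integral_hasDerivAt_right (hint p p)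
          (hgc.stronglyMeasurableAtFilter _ _) hgc.continuousAt
      rw [hasDerivAt_iff_tendsto_slope] at hp
      have := hp.comp (hseq p)
      have hs : ∀ n, (slope (fun x => ∫ t in p..x, g t) p) (p + h n)
          = (h n)⁻¹ • ∫ t in p..(p + h n), g t := by
        intro n
        simp [slope_def_module, add_sub_cancel_left]
      refine Tendsto.congr (fun n => ?_) this
      simpa [Function.comp] using hs n
    have := (prim b).sub (prim a)
    simpa [smul_sub] using this
  exact tendsto_nhds_unique key1 key2

lemma convexity_ineq (m c : ℝ) (hm : 0 < m) (hc : 0 < c) (a s : E2)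
    (ha : ‖a‖ < c) (hs : ‖s‖ ≤ c) :
    m * c ^ 2 * (1 - Real.sqrt (1 - ‖a‖ ^ 2 / c ^ 2))
      + inner ℝ ((m / Real.sqrt (1 - ‖a‖ ^ 2 / c ^ 2)) • a) (s - a)
      ≤ m * c ^ 2 * (1 - Real.sqrt (1 - ‖s‖ ^ 2 / c ^ 2)) := by
  have ha0 : 0 ≤ ‖a‖ := norm_nonneg a
  have hs0 : 0 ≤ ‖s‖ := norm_nonneg s
  have hra : 0 < 1 - ‖a‖ ^ 2 / c ^ 2 := by
    rw [sub_pos, div_lt_one (by positivity)]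
    exact pow_lt_pow_left₀ ha ha0 two_ne_zero
  have hqa : 0 ≤ 1 - ‖s‖ ^ 2 / c ^ 2 := by
    rw [sub_nonneg, div_le_one (by positivity)]
    exact pow_le_pow_left₀ hs0 hs 2
  set r := Real.sqrt (1 - ‖a‖ ^ 2 / c ^ 2) with hr
  set q := Real.sqrt (1 - ‖s‖ ^ 2 / c ^ 2) with hq
  have hrpos : 0 < r := Real.sqrt_pos.2 hra
  have hq0 : 0 ≤ q := Real.sqrt_nonneg _
  have hr2 : c ^ 2 * r ^ 2 = c ^ 2 - ‖a‖ ^ 2 := by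
    rw [hr, Real.sq_sqrt hra.le]; field_simp
  have hq2 : c ^ 2 * q ^ 2 = c ^ 2 - ‖s‖ ^ 2 := by
    rw [hq, Real.sq_sqrt hqa]; field_simp
  have hCS : (inner ℝ a s : ℝ) ≤ ‖a‖ * ‖s‖ := real_inner_le_norm a s
  have hinner : (inner ℝ ((m / r) • a) (s - a) : ℝ) = (m / r) * ((inner ℝ a s : ℝ) - ‖a‖ ^ 2) := by
    rw [real_inner_smul_left, inner_sub_right, real_inner_self_eq_norm_sq]
  rw [hinner]
  have key : c ^ 2 * r * q ≤ c ^ 2 - (inner ℝ a s : ℝ) := by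
    nlinarith [mul_nonneg (sq_nonneg c) (sq_nonneg (r - q)), sq_nonneg (‖a‖ - ‖s‖)]
  have target_mul : m * c ^ 2 * (1 - r) * r + m * ((inner ℝ a s : ℝ) - ‖a‖ ^ 2)
      ≤ m * c ^ 2 * (1 - q) * r := by
    nlinarith [mul_le_mul_of_nonneg_left key hm.le]
  rw [div_mul_eq_mul_div, ← le_sub_iff_add_le', div_le_iff₀ hrpos]
  nlinarith [target_mul]

lemma intervalIntegrable_inner_continuous {f g : ℝ → E2} {a b : ℝ}
    (hf : IntervalIntegrable f volume a b) (hg : Continuous g) :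
    IntervalIntegrable (fun t => (inner ℝ (f t) (g t) : ℝ)) volume a b := by
  obtain ⟨M, hM⟩ : ∃ M : ℝ, ∀ t ∈ Set.uIcc a b, ‖g t‖ ≤ M := by
    obtain ⟨M, hM⟩ := (isCompact_uIcc (a := a) (b := b)).exists_bound_of_continuousOn
      hg.continuousOn
    exact ⟨M, fun t ht => hM t ht⟩
  rw [intervalIntegrable_iff] at hf ⊢
  refine (hf.norm.mul_const M).mono'
    (hf.aestronglyMeasurable.inner (hg.aestronglyMeasurable.restrict)) ?_
  filter_upwards [ae_restrict_mem measurableSet_uIoc] with t ht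
  calc ‖(inner ℝ (f t) (g t) : ℝ)‖ ≤ ‖f t‖ * ‖g t‖ := norm_inner_le_norm _ _
    _ ≤ ‖f t‖ * M := by
        have := hM t (Set.uIoc_subset_uIcc ht)
        exact mul_le_mul_of_nonneg_left this (norm_nonneg _)

lemma bdd_meas_intervalIntegrable {E : Type*} [NormedAddCommGroup E] {g : ℝ → E} {a b M : ℝ}
    (hmeas : MeasureTheory.AEStronglyMeasurable g (volume.restrict (Set.uIoc a b)))
    (hbdd : ∀ t ∈ Set.uIoc a b, ‖g t‖ ≤ M) :
    IntervalIntegrable g volume a b := by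
  rw [intervalIntegrable_iff]
  refine Integrable.mono' (g := fun _ => M) ?_ hmeas ?_
  · refine integrableOn_const ?_
    rw [Set.uIoc]
    exact measure_Ioc_lt_top.ne
  · filter_upwards [ae_restrict_mem measurableSet_uIoc] with t ht
    exact hbdd t ht

end Helpers

set_option maxHeartbeats 1000000

open Filter in
/-- A `C¹` `T`-periodic solution `u` of `d/dt(φ(u̇)) = f(t)` with `‖u̇‖ < c`, where
`φ(s) = ms/√(1 − ‖s‖²/c²) = ∇F(s)` and `F(s) = mc²(1 − √(1 − ‖s‖²/c²))` is convex, is a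
global minimum of `J(v) = ∫₀ᵀ F(v̇) + ∫₀ᵀ ⟨f, v⟩` over all `T`-periodic Lipschitz paths `v`
with speed at most `c`. -/
theorem solution_is_global_minimum (m c T : ℝ) (hm : 0 < m) (hc : 0 < c) (hT : 0 < T)
    (f : ℝ → EuclideanSpace ℝ (Fin 2))
    (hf : IntervalIntegrable f MeasureTheory.volume 0 T)
    (F : EuclideanSpace ℝ (Fin 2) → ℝ)
    (hF : F = fun s => m * c ^ 2 * (1 - Real.sqrt (1 - ‖s‖ ^ 2 / c ^ 2)))
    (φ : EuclideanSpace ℝ (Fin 2) → EuclideanSpace ℝ (Fin 2))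
    (hφ : φ = fun s => (m / Real.sqrt (1 - ‖s‖ ^ 2 / c ^ 2)) • s)
    (J : (ℝ → EuclideanSpace ℝ (Fin 2)) → ℝ)
    (hJ : J = fun v => (∫ t in (0 : ℝ)..T, F (deriv v t))
        + ∫ t in (0 : ℝ)..T, (inner ℝ (f t) (v t) : ℝ))
    (u u' : ℝ → EuclideanSpace ℝ (Fin 2))
    (hu : ∀ t, HasDerivAt u (u' t) t) (hu'cont : Continuous u')
    (hu'lt : ∀ t, ‖u' t‖ < c)
    (huper : u 0 = u T) (hu'per : u' 0 = u' T)
    (hODE : ∀ t, HasDerivAt (fun s => φ (u' s)) (f t) t) :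
    ∀ v : ℝ → EuclideanSpace ℝ (Fin 2),
      LipschitzOnWith (Real.toNNReal c) v (Set.Icc 0 T) → v 0 = v T → J u ≤ J v := by
  intro v hv hvper
  have hc0 : (0:ℝ) ≤ c := hc.le
  have hucont : Continuous u := continuous_iff_continuousAt.2 fun t => (hu t).continuousAt
  -- the momentum map w
  set w : ℝ → E2 := fun t => (m / Real.sqrt (1 - ‖u' t‖ ^ 2 / c ^ 2)) • u' t with hwdef
  have hODE' : ∀ t, HasDerivAt w (f t) t := by
    intro t
    have := hODE t
    simp only [hφ] at this
    exact this
  have hsq : ∀ t, 0 < 1 - ‖u' t‖ ^ 2 / c ^ 2 := by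
    intro t
    rw [sub_pos, div_lt_one (by positivity)]
    exact pow_lt_pow_left₀ (hu'lt t) (norm_nonneg _) two_ne_zero
  have hwcont : Continuous w := by
    refine Continuous.smul (f := fun t => m / Real.sqrt (1 - ‖u' t‖ ^ 2 / c ^ 2)) (g := u') ?_ ?_
    · exact Continuous.div continuous_const
        (Real.continuous_sqrt.comp (continuous_const.sub ((hu'cont.norm.pow 2).div_const _)))
        (fun t => (Real.sqrt_pos.2 (hsq t)).ne')
    · exact hu'cont
  have hwper : w T = w 0 := by simp only [hwdef, hu'per]
  have hftot : (∫ t in (0:ℝ)..T, f t) = 0 := by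
    rw [intervalIntegral.integral_eq_sub_of_hasDerivAt (fun t _ => hODE' t) hf, hwper, sub_self]
  -- Lipschitz extension of v
  set p : ℝ → ℝ := fun t => max 0 (min t T) with hp
  have hpmem : ∀ t, p t ∈ Set.Icc 0 T := fun t => ⟨le_max_left _ _, max_le hT.le (min_le_right _ _)⟩
  have hpid : ∀ t ∈ Set.Icc (0:ℝ) T, p t = t := by
    intro t ht
    simp only [hp, min_eq_left ht.2, max_eq_right ht.1]
  have hplip : ∀ x y : ℝ, |p x - p y| ≤ |x - y| := by
    intro x y
    simp only [hp]
    calc |max 0 (min x T) - max 0 (min y T)| = |max (min x T) 0 - max (min y T) 0| := by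
          rw [max_comm, max_comm (min y T)]
      _ ≤ |min x T - min y T| := abs_max_sub_max_le_abs _ _ _
      _ = |min x T - min y T| := rfl
      _ ≤ |x - y| := by
          rcases le_total x T with h1 | h1 <;> rcases le_total y T with h2 | h2 <;>
            simp [min_eq_left, min_eq_right, h1, h2, abs_le] <;> cases abs_cases (x - y) <;>
            constructor <;> linarith [abs_nonneg (x - y), le_abs_self (x - y), neg_abs_le (x - y)]
  set vt : ℝ → E2 := fun t => v (p t) with hvt
  have hvtlip : LipschitzWith (Real.toNNReal c) vt := by
    rw [lipschitzWith_iff_dist_le_mul]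
    intro x y
    have h1 := (lipschitzOnWith_iff_dist_le_mul.1 hv) _ (hpmem x) _ (hpmem y)
    refine h1.trans ?_
    rw [Real.coe_toNNReal c hc0]
    have h2 := hplip x y
    rw [Real.dist_eq, Real.dist_eq]
    nlinarith [abs_nonneg (p x - p y), abs_nonneg (x - y)]
  have hvteq : ∀ t ∈ Set.Icc (0:ℝ) T, vt t = v t := by
    intro t ht
    simp only [hvt, hpid t ht]
  have hvt0 : vt 0 = v 0 := hvteq 0 ⟨le_rfl, hT.le⟩
  have hvtT : vt T = v T := hvteq T ⟨hT.le, le_rfl⟩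
  set V : ℝ → E2 := deriv vt with hV
  have hVmeas : Measurable V := measurable_deriv vt
  have hVle : ∀ t, ‖V t‖ ≤ c := by
    intro t
    have := norm_deriv_le_of_lipschitz (𝕜 := ℝ) (x₀ := t) hvtlip
    rwa [Real.coe_toNNReal c hc0] at this
  have hVint : ∀ a b : ℝ, IntervalIntegrable V volume a b := fun a b =>
    bdd_meas_intervalIntegrable hVmeas.aestronglyMeasurable.restrict (fun t _ => hVle t)
  have hVftc : ∀ a b : ℝ, a ≤ b → (∫ t in a..b, V t) = vt b - vt a :=
    fun a b hab => lipschitz_ftc hvtlip hab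
  have hderiv_agree : ∀ t ∈ Set.Ioo (0:ℝ) T, deriv v t = V t := by
    intro t ht
    apply Filter.EventuallyEq.deriv_eq
    filter_upwards [Icc_mem_nhds ht.1 ht.2] with x hx
    exact (hvteq x hx).symm
  -- bounds on F
  have hFcont : Continuous F := by
    rw [hF]
    exact continuous_const.mul (continuous_const.sub
      (Real.continuous_sqrt.comp (continuous_const.sub ((continuous_norm.pow 2).div_const _))))
  have hFbdd : ∀ s : E2, ‖F s‖ ≤ m * c ^ 2 := by
    intro s
    rw [hF]
    show ‖m * c ^ 2 * (1 - Real.sqrt (1 - ‖s‖ ^ 2 / c ^ 2))‖ ≤ m * c ^ 2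
    have h1 : Real.sqrt (1 - ‖s‖ ^ 2 / c ^ 2) ≤ 1 :=
      Real.sqrt_le_one.2 (sub_le_self _ (by positivity))
    have h2 : (0:ℝ) ≤ Real.sqrt (1 - ‖s‖ ^ 2 / c ^ 2) := Real.sqrt_nonneg _
    rw [Real.norm_eq_abs, abs_le]
    have h3 : 0 ≤ m * c ^ 2 := by positivity
    have h4 : m * c ^ 2 * Real.sqrt (1 - ‖s‖ ^ 2 / c ^ 2) ≤ m * c ^ 2 := by
      have := mul_le_mul_of_nonneg_left h1 h3
      linarith
    have h5 : 0 ≤ m * c ^ 2 * Real.sqrt (1 - ‖s‖ ^ 2 / c ^ 2) := mul_nonneg h3 h2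
    constructor <;> linarith
  -- integrability facts on [0, T]
  obtain ⟨M, hM0, hM⟩ : ∃ M : ℝ, 0 ≤ M ∧ ∀ t ∈ Set.Icc (0:ℝ) T, ‖w t‖ ≤ M := by
    obtain ⟨M, hM⟩ := (isCompact_Icc (a := (0:ℝ)) (b := T)).exists_bound_of_continuousOn
      hwcont.continuousOn
    exact ⟨max M 0, le_max_right _ _, fun t ht => (hM t ht).trans (le_max_left _ _)⟩
  have huIoc : Set.uIoc (0:ℝ) T ⊆ Set.Icc 0 T := by
    rw [Set.uIoc_of_le hT.le]
    exact Set.Ioc_subset_Icc_self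
  have hwVint : IntervalIntegrable (fun t => (inner ℝ (w t) (V t) : ℝ)) volume 0 T := by
    refine bdd_meas_intervalIntegrable (M := M * c)
      (hwcont.aestronglyMeasurable.restrict.inner hVmeas.aestronglyMeasurable.restrict) ?_
    intro t ht
    calc ‖(inner ℝ (w t) (V t) : ℝ)‖ ≤ ‖w t‖ * ‖V t‖ := norm_inner_le_norm _ _
      _ ≤ M * c := mul_le_mul (hM t (huIoc ht)) (hVle t) (norm_nonneg _) hM0
  have hFVint : IntervalIntegrable (fun t => F (V t)) volume 0 T :=
    bdd_meas_intervalIntegrable ((hFcont.measurable.comp hVmeas).aestronglyMeasurable.restrict)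
      (fun t _ => hFbdd (V t))
  have hfu_int : IntervalIntegrable (fun t => (inner ℝ (f t) (u t) : ℝ)) volume 0 T :=
    intervalIntegrable_inner_continuous hf hucont
  have hfvt_int : IntervalIntegrable (fun t => (inner ℝ (f t) (vt t) : ℝ)) volume 0 T :=
    intervalIntegrable_inner_continuous hf hvtlip.continuous
  have hwu'_int : IntervalIntegrable (fun t => (inner ℝ (w t) (u' t) : ℝ)) volume 0 T :=
    (hwcont.inner hu'cont).intervalIntegrable _ _
  have hFu'_int : IntervalIntegrable (fun t => F (u' t)) volume 0 T :=
    (hFcont.comp hu'cont).intervalIntegrable _ _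
  -- u-side integration by parts
  have hu_parts : (∫ t in (0:ℝ)..T, (inner ℝ (f t) (u t) : ℝ))
      + (∫ t in (0:ℝ)..T, (inner ℝ (w t) (u' t) : ℝ)) = 0 := by
    have hg : ∀ t, HasDerivAt (fun t => (inner ℝ (w t) (u t) : ℝ))
        ((inner ℝ (w t) (u' t) : ℝ) + (inner ℝ (f t) (u t) : ℝ)) t :=
      fun t => HasDerivAt.inner ℝ (hODE' t) (hu t)
    have h2 := intervalIntegral.integral_eq_sub_of_hasDerivAt (fun t _ => hg t)
      (hwu'_int.add hfu_int)
    rw [intervalIntegral.integral_add hwu'_int hfu_int, hwper, ← huper, sub_self] at h2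
    linarith
  -- primitive of f
  set P : ℝ → E2 := fun t => ∫ s in (0:ℝ)..t, f s with hPdef
  have hwrep : ∀ t ∈ Set.Icc (0:ℝ) T, w t = w 0 + P t := by
    intro t ht
    have hsub : Set.uIcc (0:ℝ) t ⊆ Set.uIcc 0 T := by
      rw [Set.uIcc_of_le ht.1, Set.uIcc_of_le hT.le]
      exact Set.Icc_subset_Icc le_rfl ht.2
    have h2 : P t = w t - w 0 :=
      intervalIntegral.integral_eq_sub_of_hasDerivAt (fun x _ => hODE' x) (hf.mono_set hsub)
    rw [h2]
    abel
  have hPc : ContinuousOn P (Set.Icc 0 T) := by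
    have := continuousOn_primitive_interval' hf (Set.left_mem_uIcc)
    rwa [Set.uIcc_of_le hT.le] at this
  obtain ⟨MP, hMP0, hMP⟩ : ∃ MP : ℝ, 0 ≤ MP ∧ ∀ t ∈ Set.Icc (0:ℝ) T, ‖P t‖ ≤ MP := by
    obtain ⟨M2, hM2⟩ := (isCompact_Icc (a := (0:ℝ)) (b := T)).exists_bound_of_continuousOn hPc
    exact ⟨max M2 0, le_max_right _ _, fun t ht => (hM2 t ht).trans (le_max_left _ _)⟩
  have hPmeas : AEStronglyMeasurable P (volume.restrict (Set.uIoc (0:ℝ) T)) := by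
    have h1 := hPc.aestronglyMeasurable (μ := volume) measurableSet_Icc
    exact h1.mono_measure (Measure.restrict_mono huIoc le_rfl)
  have hPVint : IntervalIntegrable (fun t => (inner ℝ (P t) (V t) : ℝ)) volume 0 T := by
    refine bdd_meas_intervalIntegrable (M := MP * c)
      (hPmeas.inner hVmeas.aestronglyMeasurable.restrict) ?_
    intro t ht
    calc ‖(inner ℝ (P t) (V t) : ℝ)‖ ≤ ‖P t‖ * ‖V t‖ := norm_inner_le_norm _ _
      _ ≤ MP * c := mul_le_mul (hMP t (huIoc ht)) (hVle t) (norm_nonneg _) hMP0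
  have hw0Vint : IntervalIntegrable (fun t => (inner ℝ (w 0) (V t) : ℝ)) volume 0 T := by
    refine bdd_meas_intervalIntegrable (M := ‖w 0‖ * c)
      (aestronglyMeasurable_const.inner hVmeas.aestronglyMeasurable.restrict) ?_
    intro t _
    calc ‖(inner ℝ (w 0) (V t) : ℝ)‖ ≤ ‖w 0‖ * ‖V t‖ := norm_inner_le_norm _ _
      _ ≤ ‖w 0‖ * c := mul_le_mul_of_nonneg_left (hVle t) (norm_nonneg _)
  have e0 : (∫ t in (0:ℝ)..T, (inner ℝ (w t) (V t) : ℝ))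
      = (∫ t in (0:ℝ)..T, (inner ℝ (w 0) (V t) : ℝ))
        + ∫ t in (0:ℝ)..T, (inner ℝ (P t) (V t) : ℝ) := by
    rw [← intervalIntegral.integral_add hw0Vint hPVint]
    apply intervalIntegral.integral_congr
    intro t ht
    rw [Set.uIcc_of_le hT.le] at ht
    beta_reduce
    rw [hwrep t ht, inner_add_left]
  have e1 : (∫ t in (0:ℝ)..T, (inner ℝ (w 0) (V t) : ℝ)) = 0 := by
    have h1 : (∫ t in (0:ℝ)..T, (innerSL ℝ (w 0)) (V t))
        = (innerSL ℝ (w 0)) (∫ t in (0:ℝ)..T, V t) :=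
      ContinuousLinearMap.intervalIntegral_comp_comm _ (hVint 0 T)
    simp only [innerSL_apply_apply] at h1
    rw [h1, hVftc 0 T hT.le, hvtT, hvt0, ← hvper, sub_self, inner_zero_right]
  -- Fubini on the triangle
  set μT := volume.restrict (Set.Ioc (0:ℝ) T) with hμT
  haveI : IsFiniteMeasure μT := by
    refine ⟨?_⟩
    rw [hμT, Measure.restrict_apply_univ]
    exact measure_Ioc_lt_top
  have hfI : IntegrableOn f (Set.Ioc 0 T) volume :=
    (intervalIntegrable_iff_integrableOn_Ioc_of_le hT.le).1 hf
  set K : ℝ × ℝ → ℝ :=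
    Set.indicator {q : ℝ × ℝ | q.1 < q.2} (fun q => (inner ℝ (f q.1) (V q.2) : ℝ)) with hK
  have hAmeas : MeasurableSet {q : ℝ × ℝ | q.1 < q.2} :=
    measurableSet_lt measurable_fst measurable_snd
  have hKmeas : AEStronglyMeasurable K (μT.prod μT) :=
    AEStronglyMeasurable.indicator
      ((hfI.aestronglyMeasurable.comp_fst).inner ((hVmeas.comp measurable_snd).aestronglyMeasurable))
      hAmeas
  have hKint : Integrable K (μT.prod μT) := by
    have hdom : Integrable (fun q : ℝ × ℝ => ‖f q.1‖ * c) (μT.prod μT) :=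
      Integrable.mul_prod hfI.norm (integrable_const c)
    refine hdom.mono' hKmeas (ae_of_all _ fun q => ?_)
    refine (norm_indicator_le_norm_self _ q).trans ?_
    calc ‖(inner ℝ (f q.1) (V q.2) : ℝ)‖ ≤ ‖f q.1‖ * ‖V q.2‖ := norm_inner_le_norm _ _
      _ ≤ ‖f q.1‖ * c := mul_le_mul_of_nonneg_left (hVle _) (norm_nonneg _)
  have e2 : (∫ t in (0:ℝ)..T, (inner ℝ (P t) (V t) : ℝ)) = ∫ t, (∫ s, K (s, t) ∂μT) ∂μT := by
    rw [intervalIntegral.integral_of_le hT.le]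
    refine MeasureTheory.setIntegral_congr_fun measurableSet_Ioc (fun t ht => ?_)
    have hsub : Set.uIcc (0:ℝ) t ⊆ Set.uIcc 0 T := by
      rw [Set.uIcc_of_le ht.1.le, Set.uIcc_of_le hT.le]
      exact Set.Icc_subset_Icc le_rfl ht.2
    have c1 : (∫ s in (0:ℝ)..t, (inner ℝ (f s) (V t) : ℝ)) = inner ℝ (P t) (V t) := by
      have h1 : (∫ s in (0:ℝ)..t, (innerSL ℝ (V t)) (f s))
          = (innerSL ℝ (V t)) (∫ s in (0:ℝ)..t, f s) :=
        ContinuousLinearMap.intervalIntegral_comp_comm _ (hf.mono_set hsub)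
      simp only [innerSL_apply_apply] at h1
      calc (∫ s in (0:ℝ)..t, (inner ℝ (f s) (V t) : ℝ))
          = ∫ s in (0:ℝ)..t, (inner ℝ (V t) (f s) : ℝ) := by
            apply intervalIntegral.integral_congr
            intro s _
            exact real_inner_comm _ _
        _ = inner ℝ (V t) (P t) := h1
        _ = inner ℝ (P t) (V t) := real_inner_comm _ _
    have hind : (fun s => K (s, t))
        = Set.indicator (Set.Iio t) (fun s => (inner ℝ (f s) (V t) : ℝ)) := by
      funext s
      simp only [hK, Set.indicator_apply, Set.mem_setOf_eq, Set.mem_Iio]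
    have hset : Set.Iio t ∩ Set.Ioc 0 T = Set.Ioo 0 t := by
      ext s
      simp only [Set.mem_inter_iff, Set.mem_Iio, Set.mem_Ioc, Set.mem_Ioo]
      exact ⟨fun h => ⟨h.2.1, h.1⟩, fun h => ⟨h.2, h.1, h.2.le.trans ht.2⟩⟩
    calc (inner ℝ (P t) (V t) : ℝ)
        = ∫ s in (0:ℝ)..t, (inner ℝ (f s) (V t) : ℝ) := c1.symm
      _ = ∫ s in Set.Ioc 0 t, (inner ℝ (f s) (V t) : ℝ) := intervalIntegral.integral_of_le ht.1.le
      _ = ∫ s in Set.Ioo 0 t, (inner ℝ (f s) (V t) : ℝ) := by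
          rw [Measure.restrict_congr_set Ioo_ae_eq_Ioc]
      _ = ∫ s in Set.Iio t ∩ Set.Ioc 0 T, (inner ℝ (f s) (V t) : ℝ) := by rw [hset]
      _ = ∫ s in Set.Iio t, (inner ℝ (f s) (V t) : ℝ) ∂μT := by
          rw [hμT, Measure.restrict_restrict measurableSet_Iio]
      _ = ∫ s, Set.indicator (Set.Iio t) (fun s => (inner ℝ (f s) (V t) : ℝ)) s ∂μT :=
          (MeasureTheory.integral_indicator measurableSet_Iio).symm
      _ = ∫ s, K (s, t) ∂μT := by rw [hind]
  have e3 : (∫ t, (∫ s, K (s, t) ∂μT) ∂μT) = ∫ s, (∫ t, K (s, t) ∂μT) ∂μT :=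
    MeasureTheory.integral_integral_swap (f := fun t s => K (s, t)) hKint.swap
  have e4 : (∫ s, (∫ t, K (s, t) ∂μT) ∂μT) = ∫ s, (inner ℝ (f s) (vt T - vt s) : ℝ) ∂μT := by
    rw [hμT]
    refine MeasureTheory.setIntegral_congr_fun measurableSet_Ioc (fun s hs => ?_)
    have hind2 : (fun t => K (s, t))
        = Set.indicator (Set.Ioi s) (fun t => (inner ℝ (f s) (V t) : ℝ)) := by
      funext t
      simp only [hK, Set.indicator_apply, Set.mem_setOf_eq, Set.mem_Ioi]
    have hset2 : Set.Ioi s ∩ Set.Ioc 0 T = Set.Ioc s T := by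
      ext t
      simp only [Set.mem_inter_iff, Set.mem_Ioi, Set.mem_Ioc]
      exact ⟨fun h => ⟨h.1, h.2.2⟩, fun h => ⟨h.1, hs.1.trans h.1, h.2⟩⟩
    have hVI : IntegrableOn V (Set.Ioc s T) volume :=
      (intervalIntegrable_iff_integrableOn_Ioc_of_le hs.2).1 (hVint s T)
    calc (∫ t, K (s, t) ∂μT)
        = ∫ t, Set.indicator (Set.Ioi s) (fun t => (inner ℝ (f s) (V t) : ℝ)) t ∂μT := by
          rw [hind2]
      _ = ∫ t in Set.Ioi s, (inner ℝ (f s) (V t) : ℝ) ∂μT := MeasureTheory.integral_indicator measurableSet_Ioi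
      _ = ∫ t in Set.Ioi s ∩ Set.Ioc 0 T, (inner ℝ (f s) (V t) : ℝ) := by
          rw [hμT, Measure.restrict_restrict measurableSet_Ioi]
      _ = ∫ t in Set.Ioc s T, (inner ℝ (f s) (V t) : ℝ) := by rw [hset2]
      _ = inner ℝ (f s) (∫ t in Set.Ioc s T, V t) := by
          have h1 : (∫ t in Set.Ioc s T, (innerSL ℝ (f s)) (V t))
              = (innerSL ℝ (f s)) (∫ t in Set.Ioc s T, V t) :=
            ContinuousLinearMap.integral_comp_comm _ hVI
          simpa only [innerSL_apply_apply] using h1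
      _ = inner ℝ (f s) (vt T - vt s) := by
          rw [← intervalIntegral.integral_of_le hs.2, hVftc s T hs.2]
  have e5 : (∫ s, (inner ℝ (f s) (vt T - vt s) : ℝ) ∂μT)
      = - ∫ t in (0:ℝ)..T, (inner ℝ (f t) (vt t) : ℝ) := by
    have i1 : Integrable (fun s => (inner ℝ (f s) (vt T) : ℝ)) μT := by
      rw [hμT]
      exact (intervalIntegrable_iff_integrableOn_Ioc_of_le hT.le).1
        (intervalIntegrable_inner_continuous hf continuous_const)
    have i2 : Integrable (fun s => (inner ℝ (f s) (vt s) : ℝ)) μT := by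
      rw [hμT]
      exact (intervalIntegrable_iff_integrableOn_Ioc_of_le hT.le).1
        (intervalIntegrable_inner_continuous hf hvtlip.continuous)
    have j1 : (∫ s, (inner ℝ (f s) (vt T) : ℝ) ∂μT) = 0 := by
      have h1 : (∫ s, (innerSL ℝ (vt T)) (f s) ∂μT)
          = (innerSL ℝ (vt T)) (∫ s, f s ∂μT) := by
        apply ContinuousLinearMap.integral_comp_comm
        rw [hμT]
        exact hfI
      simp only [innerSL_apply_apply] at h1
      have h2 : (∫ s, f s ∂μT) = 0 := by
        rw [hμT, ← intervalIntegral.integral_of_le hT.le]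
        exact hftot
      calc (∫ s, (inner ℝ (f s) (vt T) : ℝ) ∂μT)
          = ∫ s, (inner ℝ (vt T) (f s) : ℝ) ∂μT := by
            apply MeasureTheory.integral_congr_ae
            exact ae_of_all _ fun s => real_inner_comm _ _
        _ = inner ℝ (vt T) (∫ s, f s ∂μT) := h1
        _ = 0 := by rw [h2, inner_zero_right]
    calc (∫ s, (inner ℝ (f s) (vt T - vt s) : ℝ) ∂μT)
        = ∫ s, ((inner ℝ (f s) (vt T) : ℝ) - (inner ℝ (f s) (vt s) : ℝ)) ∂μT := by
          apply MeasureTheory.integral_congr_ae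
          exact ae_of_all _ fun s => inner_sub_right _ _ _
      _ = (∫ s, (inner ℝ (f s) (vt T) : ℝ) ∂μT) - ∫ s, (inner ℝ (f s) (vt s) : ℝ) ∂μT :=
          integral_sub i1 i2
      _ = - ∫ s, (inner ℝ (f s) (vt s) : ℝ) ∂μT := by rw [j1]; ring
      _ = - ∫ t in (0:ℝ)..T, (inner ℝ (f t) (vt t) : ℝ) := by
          rw [hμT, ← intervalIntegral.integral_of_le hT.le]
  have hv_parts : (∫ t in (0:ℝ)..T, (inner ℝ (w t) (V t) : ℝ))
      = - ∫ t in (0:ℝ)..T, (inner ℝ (f t) (vt t) : ℝ) := by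
    rw [e0, e1, e2, e3, e4, e5]
    ring
  -- pointwise convexity inequality
  have hpt : ∀ t ∈ Set.Icc (0:ℝ) T,
      F (u' t) + ((inner ℝ (w t) (V t) : ℝ) - (inner ℝ (w t) (u' t) : ℝ)) ≤ F (V t) := by
    intro t _
    have h1 := convexity_ineq m c hm hc (u' t) (V t) (hu'lt t) (hVle t)
    rw [← inner_sub_right]
    simp only [hF]
    exact h1
  have hmono : (∫ t in (0:ℝ)..T,
        (F (u' t) + ((inner ℝ (w t) (V t) : ℝ) - (inner ℝ (w t) (u' t) : ℝ))))
      ≤ ∫ t in (0:ℝ)..T, F (V t) := by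
    apply intervalIntegral.integral_mono_on hT.le (hFu'_int.add (hwVint.sub hwu'_int)) hFVint
    exact hpt
  have hJu1 : (∫ t in (0:ℝ)..T, F (deriv u t)) = ∫ t in (0:ℝ)..T, F (u' t) := by
    apply intervalIntegral.integral_congr
    intro t _
    beta_reduce
    rw [(hu t).deriv]
  have hTnull : ∀ᵐ x : ℝ, x ≠ T := by
    have h1 : volume ({T} : Set ℝ) = 0 := measure_singleton T
    rw [ae_iff]
    simpa [Set.setOf_eq_eq_singleton, not_not] using h1
  have hJv1 : (∫ t in (0:ℝ)..T, F (deriv v t)) = ∫ t in (0:ℝ)..T, F (V t) := by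
    apply intervalIntegral.integral_congr_ae
    filter_upwards [hTnull] with x hx hmem
    rw [Set.uIoc_of_le hT.le] at hmem
    beta_reduce
    rw [hderiv_agree x ⟨hmem.1, lt_of_le_of_ne hmem.2 hx⟩]
  have hJv2 : (∫ t in (0:ℝ)..T, (inner ℝ (f t) (v t) : ℝ))
      = ∫ t in (0:ℝ)..T, (inner ℝ (f t) (vt t) : ℝ) := by
    apply intervalIntegral.integral_congr
    intro t ht
    rw [Set.uIcc_of_le hT.le] at ht
    beta_reduce
    rw [hvteq t ht]
  have hsplit : (∫ t in (0:ℝ)..T,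
        (F (u' t) + ((inner ℝ (w t) (V t) : ℝ) - (inner ℝ (w t) (u' t) : ℝ))))
      = (∫ t in (0:ℝ)..T, F (u' t))
        + ((∫ t in (0:ℝ)..T, (inner ℝ (w t) (V t) : ℝ))
          - ∫ t in (0:ℝ)..T, (inner ℝ (w t) (u' t) : ℝ)) := by
    rw [intervalIntegral.integral_add hFu'_int (hwVint.sub hwu'_int),
      intervalIntegral.integral_sub hwVint hwu'_int]
  simp only [hJ]
  rw [hJu1, hJv1, hJv2]
  linarith [hmono, hsplit, hu_parts, hv_parts]
end

section
/- The path x_C(t) = R e^{iωt} with R = L√(L²c² − α²)/(mαc) and ω = mα²c/(L²√(L²c² − α²)) (for L > α/c) solves the relativistic Kepler equation d/dt( m ẋ/√(1 − |ẋ|²/c²) ) = −α x/|x|³. -/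
open Real

lemma circ_aux0 (b : ℝ) (t : ℝ) :
    HasDerivAt (fun u : ℝ => ((b * u : ℝ) : ℂ) * Complex.I) ((b : ℂ) * Complex.I) t := by
  have h : HasDerivAt (fun u : ℝ => (b * u : ℝ)) b t := by
    simpa using (hasDerivAt_id t).const_mul b
  exact h.ofReal_comp.mul_const Complex.I

lemma circ_aux1 (a b : ℝ) (t : ℝ) :
    HasDerivAt (fun u : ℝ => (a : ℂ) * Complex.exp ((b * u : ℝ) * Complex.I))
      (((a * b : ℝ) : ℂ) * Complex.I * Complex.exp ((b * t : ℝ) * Complex.I)) t := by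
  have h2 := ((circ_aux0 b t).cexp).const_mul (a : ℂ)
  convert h2 using 1
  · rfl
  push_cast
  ring

lemma circ_aux2 (k a b : ℝ) (t : ℝ) :
    HasDerivAt (fun u : ℝ => (k : ℂ) * (((a : ℝ) : ℂ) * Complex.I *
        Complex.exp ((b * u : ℝ) * Complex.I)))
      (-((k * a * b : ℝ) : ℂ) * Complex.exp ((b * t : ℝ) * Complex.I)) t := by
  have h2 := (((circ_aux0 b t).cexp).const_mul (((a : ℝ) : ℂ) * Complex.I)).const_mul (k : ℂ)
  convert h2 using 1
  · rfl
  push_cast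
  linear_combination (-((k : ℂ) * a * b * Complex.exp (((b : ℂ) * t) * Complex.I))) *
    Complex.I_mul_I

/-- The circular path `x_C(t) = R e^{iωt}` with `R = L√(L²c² − α²)/(mαc)` and
`ω = mα²c/(L²√(L²c² − α²))` (for `L > α/c`) solves the relativistic Kepler equation
`d/dt( m ẋ/√(1 − |ẋ|²/c²) ) = −α x/|x|³`; in particular its speed `Rω` is less than `c`. -/
theorem circular_path_solves_kepler (m c α L : ℝ) (hm : 0 < m) (hc : 0 < c) (hα : 0 < α)
    (hL : α / c < L) :
    let R : ℝ := L * Real.sqrt (L ^ 2 * c ^ 2 - α ^ 2) / (m * α * c)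
    let ω : ℝ := m * α ^ 2 * c / (L ^ 2 * Real.sqrt (L ^ 2 * c ^ 2 - α ^ 2))
    let x : ℝ → ℂ := fun t => (R : ℂ) * Complex.exp ((ω * t : ℝ) * Complex.I)
    let x' : ℝ → ℂ := fun t => (R * ω : ℝ) * Complex.I * Complex.exp ((ω * t : ℝ) * Complex.I)
    R * ω < c ∧
    (∀ t, HasDerivAt x (x' t) t) ∧
    (∀ t, HasDerivAt (fun s => ((m / Real.sqrt (1 - ‖x' s‖ ^ 2 / c ^ 2) : ℝ) : ℂ) * x' s)
        (-(α : ℂ) * x t / ((‖x t‖ ^ 3 : ℝ) : ℂ)) t) := by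
  intro R ω x x'
  have hL0 : 0 < L := lt_trans (div_pos hα hc) hL
  have hS : 0 < L ^ 2 * c ^ 2 - α ^ 2 := by
    have h1 : α < L * c := (div_lt_iff₀ hc).mp hL
    nlinarith
  set s := Real.sqrt (L ^ 2 * c ^ 2 - α ^ 2) with hs_def
  have hs : 0 < s := Real.sqrt_pos.mpr hS
  have hs2 : s ^ 2 = L ^ 2 * c ^ 2 - α ^ 2 := Real.sq_sqrt hS.le
  have hR : 0 < R := div_pos (mul_pos hL0 hs) (mul_pos (mul_pos hm hα) hc)
  have hω : 0 < ω := div_pos (mul_pos (mul_pos hm (pow_pos hα 2)) hc)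
    (mul_pos (pow_pos hL0 2) hs)
  have hRω : R * ω = α / L := by
    show L * s / (m * α * c) * (m * α ^ 2 * c / (L ^ 2 * s)) = α / L
    field_simp
  have hspeed : R * ω < c := by
    rw [hRω, div_lt_iff₀ hL0]
    calc α = α / c * c := by field_simp
    _ < L * c := mul_lt_mul_of_pos_right hL hc
    _ = c * L := by ring
  refine ⟨hspeed, fun t => circ_aux1 R ω t, ?_⟩
  intro t
  -- norm of velocity is constant
  have hnorm : ∀ u : ℝ, ‖x' u‖ = R * ω := by
    intro u
    show ‖((R * ω : ℝ) : ℂ) * Complex.I * Complex.exp ((ω * u : ℝ) * Complex.I)‖ = R * ω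
    rw [norm_mul, norm_mul, Complex.norm_exp]
    simp [abs_of_pos (mul_pos hR hω), abs_of_pos hR, abs_of_pos hω]
  have hfac : (1 : ℝ) - (R * ω) ^ 2 / c ^ 2 = s ^ 2 / (L ^ 2 * c ^ 2) := by
    rw [hRω, hs2]
    field_simp
  have hsqrtfac : Real.sqrt (1 - (R * ω) ^ 2 / c ^ 2) = s / (L * c) := by
    rw [hfac, show s ^ 2 / (L ^ 2 * c ^ 2) = (s / (L * c)) ^ 2 by rw [div_pow]; ring_nf]
    exact Real.sqrt_sq (div_pos hs (mul_pos hL0 hc)).le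
  have hconst : ∀ u : ℝ, (m / Real.sqrt (1 - ‖x' u‖ ^ 2 / c ^ 2) : ℝ) = m * L * c / s := by
    intro u
    rw [hnorm, hsqrtfac]
    field_simp
  have heq : (fun u => ((m / Real.sqrt (1 - ‖x' u‖ ^ 2 / c ^ 2) : ℝ) : ℂ) * x' u) =
      (fun u => ((m * L * c / s : ℝ) : ℂ) * x' u) := by
    funext u; rw [hconst u]
  rw [heq]
  have hxt : ‖x t‖ = R := by
    show ‖(R : ℂ) * Complex.exp ((ω * t : ℝ) * Complex.I)‖ = R
    rw [norm_mul, Complex.norm_exp]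
    simp [abs_of_pos hR]
  -- key scalar identity
  have key : α / R ^ 2 = m * L * c / s * (R * ω) * ω := by
    show α / (L * s / (m * α * c)) ^ 2 =
      m * L * c / s * (L * s / (m * α * c) * (m * α ^ 2 * c / (L ^ 2 * s))) *
        (m * α ^ 2 * c / (L ^ 2 * s))
    field_simp
  have hRne : (R : ℂ) ≠ 0 := by exact_mod_cast hR.ne'
  have hval : -(α : ℂ) * x t / ((‖x t‖ ^ 3 : ℝ) : ℂ) =
      -((m * L * c / s * (R * ω) * ω : ℝ) : ℂ) *
        Complex.exp ((ω * t : ℝ) * Complex.I) := by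
    rw [hxt]
    show -(α : ℂ) * ((R : ℂ) * Complex.exp ((ω * t : ℝ) * Complex.I)) / ((R ^ 3 : ℝ) : ℂ) = _
    have keyC : ((α / R ^ 2 : ℝ) : ℂ) = ((m * L * c / s * (R * ω) * ω : ℝ) : ℂ) := by
      exact congrArg Complex.ofReal key
    push_cast at keyC ⊢
    rw [← keyC]
    field_simp
  rw [hval]
  exact circ_aux2 (m * L * c / s) (R * ω) ω t
end

section
/- Let T_* = 2πα/(mc³) and for integers 1 ≤ n < k define u^k_n = n k³ (k² − n²)^{−3/2} T_*. Then the energy–angular momentum pair (h, L) with L² = (α²/c²)·k²/(k² − n²) and m²c⁴ − h² = (2π α m² c³ n / T)^{2/3} belongs to the set Σ = {0 < h < mc², α²/c² < L² < α²m²c²/(m²c⁴ − h²)} if and only if T > u^k_n. -/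
open Real

/-- The energy–angular momentum pair `(h, L)` of a candidate `(n,k)`-type solution, given by
`L² = (α²/c²)·k²/(k² − n²)` and `h = √(m²c⁴ − (2παm²c³n/T)^{2/3})`, belongs to the set
`Σ = {0 < h < mc², α²/c² < L² < α²m²c²/(m²c⁴ − h²)}` if and only if
`T > u^k_n = nk³(k² − n²)^{−3/2}·(2πα/(mc³))`. -/
theorem energy_momentum_in_sigma_iff (m c α T : ℝ) (hm : 0 < m) (hc : 0 < c) (hα : 0 < α)
    (hT : 0 < T) (k n : ℕ) (hk : 2 ≤ k) (hn : 1 ≤ n) (hnk : n ≤ k - 1) :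
    let h : ℝ := Real.sqrt (m ^ 2 * c ^ 4 - (2 * π * α * m ^ 2 * c ^ 3 * n / T) ^ ((2:ℝ)/3))
    let L2 : ℝ := α ^ 2 / c ^ 2 * (k ^ 2 / ((k : ℝ) ^ 2 - (n : ℝ) ^ 2))
    (0 < h ∧ h < m * c ^ 2 ∧ α ^ 2 / c ^ 2 < L2 ∧
        L2 < α ^ 2 * m ^ 2 * c ^ 2 / (m ^ 2 * c ^ 4 - h ^ 2)) ↔
      T > (n : ℝ) * (k : ℝ) ^ 3 / ((k : ℝ) ^ 2 - (n : ℝ) ^ 2) ^ ((3:ℝ)/2)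
        * (2 * π * α / (m * c ^ 3)) := by
  intro h L2
  have hπ := Real.pi_pos
  have hnltk : n < k := by omega
  have hnR : (1:ℝ) ≤ (n:ℝ) := by exact_mod_cast hn
  have hnpos : (0:ℝ) < (n:ℝ) := by linarith
  have hkR : (n:ℝ) < (k:ℝ) := by exact_mod_cast hnltk
  have hkpos : (0:ℝ) < (k:ℝ) := by linarith
  set E : ℝ := (k:ℝ) ^ 2 - (n:ℝ) ^ 2 with hEdef
  have hEpos : 0 < E := by nlinarith
  have hEk : E < (k:ℝ) ^ 2 := by nlinarith
  set A : ℝ := 2 * π * α * m ^ 2 * c ^ 3 * (n:ℝ) / T with hAdef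
  have hApos : 0 < A := by positivity
  set B : ℝ := A ^ ((2:ℝ)/3) with hBdef
  have hBpos : 0 < B := Real.rpow_pos_of_pos hApos _
  have hB3 : B ^ 3 = A ^ 2 := by
    rw [hBdef, ← Real.rpow_natCast (A ^ ((2:ℝ)/3)) 3, ← Real.rpow_mul hApos.le,
      ← Real.rpow_natCast A 2]
    norm_num
  set D : ℝ := m ^ 2 * c ^ 4 * E / (k:ℝ) ^ 2 with hDdef
  have hDpos : 0 < D := by positivity
  set S : ℝ := E ^ ((3:ℝ)/2) with hSdef
  have hSpos : 0 < S := Real.rpow_pos_of_pos hEpos _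
  have hS2 : S ^ 2 = E ^ 3 := by
    rw [hSdef, ← Real.rpow_natCast (E ^ ((3:ℝ)/2)) 2, ← Real.rpow_mul hEpos.le,
      ← Real.rpow_natCast E 3]
    norm_num
  -- key equivalence: B < D ↔ T > u
  have key : B < D ↔
      T > (n:ℝ) * (k:ℝ) ^ 3 / E ^ ((3:ℝ)/2) * (2 * π * α / (m * c ^ 3)) := by
    rw [show (n:ℝ) * (k:ℝ) ^ 3 / E ^ ((3:ℝ)/2) * (2 * π * α / (m * c ^ 3))
        = (n:ℝ) * (k:ℝ) ^ 3 * (2 * π * α) / (S * (m * c ^ 3)) by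
      rw [hSdef, div_mul_div_comm]]
    rw [gt_iff_lt, div_lt_iff₀ (by positivity)]
    constructor
    · intro hBD
      have h1 : B ^ 3 < D ^ 3 := pow_lt_pow_left₀ hBD hBpos.le (by norm_num)
      rw [hB3] at h1
      have h2 : A ^ 2 * (k:ℝ) ^ 6 < m ^ 6 * c ^ 12 * E ^ 3 := by
        have : D ^ 3 = (m ^ 2 * c ^ 4 * E) ^ 3 / ((k:ℝ) ^ 2) ^ 3 := by
          rw [hDdef, div_pow]
        rw [this, lt_div_iff₀ (by positivity)] at h1
        linarith [h1]
      have h3 : A = 2 * π * α * m ^ 2 * c ^ 3 * (n:ℝ) / T := hAdef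
      have h4 : (2 * π * α * m ^ 2 * c ^ 3 * (n:ℝ)) ^ 2 * (k:ℝ) ^ 6
          < m ^ 6 * c ^ 12 * E ^ 3 * T ^ 2 := by
        rw [h3, div_pow] at h2
        rw [div_mul_eq_mul_div, div_lt_iff₀ (by positivity)] at h2
        linarith [h2]
      -- conclude: n k³ 2πα < T S m c³ via squaring
      have hsq : ((n:ℝ) * (k:ℝ) ^ 3 * (2 * π * α)) ^ 2 < (T * (S * (m * c ^ 3))) ^ 2 := by
        have hTS : (T * (S * (m * c ^ 3))) ^ 2 = T ^ 2 * (E ^ 3 * (m ^ 2 * c ^ 6)) := by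
          rw [mul_pow, mul_pow, mul_pow, hS2]; ring
        rw [hTS]
        have hmc : (0:ℝ) < m ^ 4 * c ^ 6 := by positivity
        refine lt_of_mul_lt_mul_right ?_ hmc.le
        linarith [h4]
      exact (pow_lt_pow_iff_left₀ (by positivity) (by positivity)
        (by norm_num : (2:ℕ) ≠ 0)).mp hsq
    · intro hTu
      have hsq : ((n:ℝ) * (k:ℝ) ^ 3 * (2 * π * α)) ^ 2 < (T * (S * (m * c ^ 3))) ^ 2 :=
        pow_lt_pow_left₀ hTu (by positivity) (by norm_num)
      have hTS : (T * (S * (m * c ^ 3))) ^ 2 = T ^ 2 * (E ^ 3 * (m ^ 2 * c ^ 6)) := by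
        rw [mul_pow, mul_pow, mul_pow, hS2]; ring
      rw [hTS] at hsq
      have hA2 : A ^ 2 < D ^ 3 := by
        have hD3 : D ^ 3 = (m ^ 2 * c ^ 4 * E) ^ 3 / ((k:ℝ) ^ 2) ^ 3 := by
          rw [hDdef, div_pow]
        rw [hAdef, div_pow, hD3, div_lt_div_iff₀ (by positivity) (by positivity)]
        have hmc : (0:ℝ) < m ^ 4 * c ^ 6 := by positivity
        have h5 := mul_lt_mul_of_pos_right hsq hmc
        linarith [h5]
      rw [← hB3] at hA2
      exact (pow_lt_pow_iff_left₀ hBpos.le hDpos.le (by norm_num : (3:ℕ) ≠ 0)).mp hA2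
  have hheq : h = Real.sqrt (m ^ 2 * c ^ 4 - B) := rfl
  have hL2eq : L2 = α ^ 2 * (k:ℝ) ^ 2 / (c ^ 2 * E) := by
    show α ^ 2 / c ^ 2 * ((k:ℝ) ^ 2 / E) = _
    rw [div_mul_div_comm]
  rw [← key]
  constructor
  · rintro ⟨h1, h2, h3, h4⟩
    rw [hheq, Real.sqrt_pos] at h1
    have hsq : h ^ 2 = m ^ 2 * c ^ 4 - B := by
      rw [hheq]; exact Real.sq_sqrt h1.le
    rw [hsq] at h4
    have h4' : L2 < α ^ 2 * m ^ 2 * c ^ 2 / B := by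
      convert h4 using 2; ring
    rw [hL2eq, div_lt_div_iff₀ (by positivity) hBpos] at h4'
    rw [hDdef, lt_div_iff₀ (by positivity)]
    refine lt_of_mul_lt_mul_left ?_ (sq_nonneg α)
    linarith [h4']
  · intro hBD
    have hDm : D < m ^ 2 * c ^ 4 := by
      rw [hDdef, div_lt_iff₀ (by positivity)]
      have := mul_lt_mul_of_pos_left hEk (show (0:ℝ) < m ^ 2 * c ^ 4 by positivity)
      linarith
    have hBm : B < m ^ 2 * c ^ 4 := lt_trans hBD hDm
    have h1 : 0 < h := by
      rw [hheq, Real.sqrt_pos]; linarith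
    have hsq : h ^ 2 = m ^ 2 * c ^ 4 - B := by
      rw [hheq]; exact Real.sq_sqrt (by linarith)
    refine ⟨h1, ?_, ?_, ?_⟩
    · rw [hheq, Real.sqrt_lt' (by positivity)]
      nlinarith
    · show α ^ 2 / c ^ 2 < α ^ 2 / c ^ 2 * ((k:ℝ) ^ 2 / E)
      exact lt_mul_of_one_lt_right (by positivity)
        ((one_lt_div hEpos).mpr hEk)
    · rw [hsq]
      have : m ^ 2 * c ^ 4 - (m ^ 2 * c ^ 4 - B) = B := by ring
      rw [this, hL2eq, div_lt_div_iff₀ (by positivity) hBpos]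
      rw [hDdef, lt_div_iff₀ (by positivity)] at hBD
      have h6 := mul_lt_mul_of_pos_left hBD (pow_pos hα 2)
      linarith [h6]
end

section
/- If T > n k³ (k² − n²)^{−3/2} · 2πα/(mc³) for an integer n with 1 ≤ n ≤ k − 1, then ζ(n) = m^{2/3}c² n² + (2πα/T)^{2/3} k² n^{2/3} − m^{2/3}c² k² < 0. Consequently the action levels I^k_n = mc²T + (2πα/c)√(k² − n²) − (T/c)(m^{2/3}c² − (2παn/T)^{2/3})^{3/2} satisfy I^k_1 ≤ I^k_2 ≤ ⋯ ≤ I^k_{i_T} whenever T > u^k_{i_T}. -/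
open Real

private lemma rpow_rpow_aux {x p q r : ℝ} (hx : 0 ≤ x) (h : p * q = r) :
    (x ^ p) ^ q = x ^ r := by rw [← Real.rpow_mul hx, h]

private lemma rpow23_cube {x : ℝ} (hx : 0 ≤ x) : (x ^ ((2:ℝ)/3)) ^ 3 = x ^ 2 := by
  rw [← Real.rpow_natCast (x ^ ((2:ℝ)/3)) 3, rpow_rpow_aux hx (by norm_num : (2:ℝ)/3 * (3:ℕ) = (2:ℕ)),
    Real.rpow_natCast]

set_option maxHeartbeats 2000000 in
/-- If `T > u^k_{i_T}` then `ζ(n) < 0` for all `1 ≤ n ≤ i_T`, and consequently the action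
levels `I^k_n` of the non-circular solutions are increasing in `n`:
`I^k_1 ≤ I^k_2 ≤ ⋯ ≤ I^k_{i_T}`. -/
theorem action_levels_increasing (m c α T : ℝ) (hm : 0 < m) (hc : 0 < c) (hα : 0 < α)
    (hT : 0 < T) (k iT : ℕ) (hk : 2 ≤ k) (hiT : 1 ≤ iT) (hiTk : iT ≤ k - 1)
    (u : ℕ → ℝ)
    (hu : u = fun n : ℕ => (n : ℝ) * (k : ℝ) ^ 3 / ((k : ℝ) ^ 2 - (n : ℝ) ^ 2) ^ ((3:ℝ)/2)
        * (2 * π * α / (m * c ^ 3)))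
    (ζ : ℝ → ℝ)
    (hζ : ζ = fun s => m ^ ((2:ℝ)/3) * c ^ 2 * s ^ 2
        + (2 * π * α / T) ^ ((2:ℝ)/3) * (k : ℝ) ^ 2 * s ^ ((2:ℝ)/3)
        - m ^ ((2:ℝ)/3) * c ^ 2 * (k : ℝ) ^ 2)
    (I : ℕ → ℝ)
    (hI : I = fun n : ℕ => m * c ^ 2 * T + (2 * π * α / c) * Real.sqrt ((k : ℝ) ^ 2 - (n : ℝ) ^ 2)
        - (T / c) * (m ^ ((2:ℝ)/3) * c ^ 2 - (2 * π * α * (n : ℝ) / T) ^ ((2:ℝ)/3)) ^ ((3:ℝ)/2))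
    (hTbig : T > u iT) :
    (∀ n : ℕ, 1 ≤ n → n ≤ iT → ζ (n : ℝ) < 0) ∧
    (∀ n : ℕ, 1 ≤ n → n + 1 ≤ iT → I n ≤ I (n + 1)) := by
  have hπ : (0:ℝ) < π := Real.pi_pos
  set P : ℝ := 2 * π * α with hP
  have hPpos : 0 < P := by rw [hP]; positivity
  set A : ℝ := m ^ ((2:ℝ)/3) * c ^ 2 with hA
  have hApos : 0 < A := by rw [hA]; positivity
  set B : ℝ := (P / T) ^ ((2:ℝ)/3) with hB
  have hBpos : 0 < B := by rw [hB]; positivity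
  clear_value P A B
  have hiTk1 : (iT:ℝ) + 1 ≤ (k:ℝ) := by exact_mod_cast (by omega : iT + 1 ≤ k)
  have hiTlt : (iT:ℝ) < k := by linarith
  have hiT1 : (1:ℝ) ≤ (iT:ℝ) := by exact_mod_cast hiT
  have hkpos : (0:ℝ) < k := by linarith
  have hDiT : (0:ℝ) < (k:ℝ)^2 - (iT:ℝ)^2 := by nlinarith
  have hPB : P ^ 2 = T ^ 2 * B ^ 3 := by
    have h1 : B ^ 3 = (P / T) ^ 2 := by
      rw [hB, ← Real.rpow_natCast ((P/T) ^ ((2:ℝ)/3)) 3,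
        rpow_rpow_aux (by positivity) (by norm_num : (2:ℝ)/3 * (3:ℕ) = (2:ℕ)),
        Real.rpow_natCast]
    rw [h1, div_pow]
    field_simp
  -- key inequality at iT
  have hζiT : B * (iT:ℝ) ^ ((2:ℝ)/3) * (k:ℝ)^2 < A * ((k:ℝ)^2 - (iT:ℝ)^2) := by
    have hD32 : (0:ℝ) < ((k:ℝ)^2 - (iT:ℝ)^2) ^ ((3:ℝ)/2) := Real.rpow_pos_of_pos hDiT _
    have h := hTbig
    rw [hu] at h
    simp only at h
    rw [gt_iff_lt, div_mul_div_comm, div_lt_iff₀ (by positivity)] at h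
    -- h : iT * k^3 * P < T * (D32 * (m*c^3))
    have hkey : P / T * (iT:ℝ) * (k:ℝ)^3 < m * c^3 * (((k:ℝ)^2 - (iT:ℝ)^2) ^ ((3:ℝ)/2)) := by
      rw [div_mul_eq_mul_div, div_mul_eq_mul_div, div_lt_iff₀ hT]
      linear_combination h
    have h2 := Real.rpow_lt_rpow (by positivity) hkey (by norm_num : (0:ℝ) < (2:ℝ)/3)
    rw [Real.mul_rpow (by positivity) (by positivity), Real.mul_rpow (by positivity) (by positivity),
      Real.mul_rpow (by positivity) (by positivity), Real.mul_rpow (by positivity) (by positivity)]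
      at h2
    rw [← Real.rpow_natCast (k:ℝ) 3, rpow_rpow_aux hkpos.le (by norm_num : (3:ℕ) * ((2:ℝ)/3) = (2:ℕ)),
      Real.rpow_natCast, ← Real.rpow_natCast c 3,
      rpow_rpow_aux hc.le (by norm_num : (3:ℕ) * ((2:ℝ)/3) = (2:ℕ)), Real.rpow_natCast,
      rpow_rpow_aux hDiT.le (by norm_num : (3:ℝ)/2 * ((2:ℝ)/3) = 1), Real.rpow_one] at h2
    rw [hB, hA]
    nlinarith [h2]
  -- ζ negative on (0, iT]
  have hζs : ∀ x : ℝ, 0 < x → x ≤ (iT:ℝ) →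
      A * x ^ 2 + B * (k:ℝ)^2 * x ^ ((2:ℝ)/3) - A * (k:ℝ)^2 < 0 := by
    intro x hx hxiT
    have h1 : x ^ ((2:ℝ)/3) ≤ (iT:ℝ) ^ ((2:ℝ)/3) :=
      Real.rpow_le_rpow hx.le hxiT (by norm_num)
    have h2 : x ^ 2 ≤ (iT:ℝ) ^ 2 := by nlinarith
    have h3 : B * (k:ℝ)^2 * x ^ ((2:ℝ)/3) ≤ B * (k:ℝ)^2 * (iT:ℝ) ^ ((2:ℝ)/3) := by
      apply mul_le_mul_of_nonneg_left h1 (by positivity)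
    have h4 := mul_le_mul_of_nonneg_left h2 hApos.le
    linarith [hζiT, h3, h4]
  have hζeq : ∀ x : ℝ, ζ x = A * x ^ 2 + B * (k:ℝ)^2 * x ^ ((2:ℝ)/3) - A * (k:ℝ)^2 := by
    intro x; rw [hζ, hA, hB, hP]
  constructor
  · intro n hn1 hniT
    rw [hζeq]
    exact hζs _ (Nat.cast_pos.mpr hn1) (Nat.cast_le.mpr hniT)
  · -- monotonicity of the action levels
    have hDpos : ∀ x : ℝ, 0 < x → x ≤ (iT:ℝ) → (0:ℝ) < (k:ℝ)^2 - x^2 := by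
      intro x hx hxiT
      have hxk : x < (k:ℝ) := lt_of_le_of_lt hxiT hiTlt
      nlinarith
    have hux : ∀ x : ℝ, 0 < x → x ≤ (iT:ℝ) → 0 < A - B * x ^ ((2:ℝ)/3) := by
      intro x hx hxiT
      have h := hζs x hx hxiT
      have h' : B * x ^ ((2:ℝ)/3) * (k:ℝ)^2 < A * (k:ℝ)^2 := by
        nlinarith [mul_nonneg hApos.le (sq_nonneg x)]
      have h'' := lt_of_mul_lt_mul_right h' (sq_nonneg (k:ℝ))
      linarith
    have hF0 : ∀ x : ℝ, 1 ≤ x → x ≤ (iT:ℝ) →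
        0 ≤ P / c * (-(2*x) / (2 * Real.sqrt ((k:ℝ)^2 - x^2)))
          - T / c * (-(B * ((2:ℝ)/3 * x ^ ((2:ℝ)/3 - 1))) * ((3:ℝ)/2)
              * (A - B * x ^ ((2:ℝ)/3)) ^ ((3:ℝ)/2 - 1)) := by
      intro x hx1 hxiT
      have hx : (0:ℝ) < x := lt_of_lt_of_le one_pos hx1
      have hDx : (0:ℝ) < (k:ℝ)^2 - x^2 := hDpos x hx hxiT
      have hζx := hζs x hx hxiT
      have hu0 : 0 < A - B * x ^ ((2:ℝ)/3) := hux x hx hxiT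
      have hcube : (x ^ ((2:ℝ)/3)) ^ 3 = x ^ 2 := rpow23_cube hx.le
      set x23 := x ^ ((2:ℝ)/3) with hx23
      have hx23pos : 0 < x23 := Real.rpow_pos_of_pos hx _
      have hsD : (0:ℝ) < Real.sqrt ((k:ℝ)^2 - x^2) := Real.sqrt_pos.mpr hDx
      have hsU : (0:ℝ) < Real.sqrt (A - B * x23) := Real.sqrt_pos.mpr hu0
      have e3 : x ^ ((2:ℝ)/3 - 1) = x23 / x := by
        rw [Real.rpow_sub hx, Real.rpow_one, hx23]
      have e4 : (A - B * x23) ^ ((3:ℝ)/2 - 1) = Real.sqrt (A - B * x23) := by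
        rw [show (3:ℝ)/2 - 1 = 1/2 by norm_num, Real.sqrt_eq_rpow]
      rw [e3, e4]
      have hkey : B * x^2 * x23 ≤ (A - B * x23) * ((k:ℝ)^2 - x^2) := by nlinarith [hζx]
      have h6 : B * x^4 ≤ (A - B * x23) * ((k:ℝ)^2 - x^2) * x23^2 := by
        nlinarith [mul_le_mul_of_nonneg_right hkey (sq_nonneg x23), hcube,
          mul_nonneg hBpos.le (sq_nonneg x)]
      have hb : (0:ℝ) ≤ T * B * x23 * Real.sqrt (A - B * x23) / x := by positivity
      have hab : P * x / Real.sqrt ((k:ℝ)^2 - x^2)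
          ≤ T * B * x23 * Real.sqrt (A - B * x23) / x := by
        apply le_of_pow_le_pow_left₀ (by norm_num : (2:ℕ) ≠ 0) hb
        rw [div_pow, div_pow, mul_pow P x, Real.sq_sqrt hDx.le,
          mul_pow (T * B * x23) (Real.sqrt (A - B * x23)), Real.sq_sqrt hu0.le,
          div_le_div_iff₀ hDx (by positivity : (0:ℝ) < x^2), hPB]
        nlinarith [mul_le_mul_of_nonneg_left h6
          (by positivity : (0:ℝ) ≤ T^2 * B^2)]
      have heq : P / c * (-(2*x) / (2 * Real.sqrt ((k:ℝ)^2 - x^2)))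
          - T / c * (-(B * ((2:ℝ)/3 * (x23 / x))) * ((3:ℝ)/2) * Real.sqrt (A - B * x23))
          = (T * B * x23 * Real.sqrt (A - B * x23) / x
              - P * x / Real.sqrt ((k:ℝ)^2 - x^2)) / c := by
        field_simp
        ring
      rw [heq]
      exact div_nonneg (sub_nonneg.mpr hab) hc.le
    obtain ⟨f, hf⟩ : ∃ f : ℝ → ℝ, f = fun s => P / c * Real.sqrt ((k:ℝ)^2 - s^2)
        - T / c * (A - B * s ^ ((2:ℝ)/3)) ^ ((3:ℝ)/2) := ⟨_, rfl⟩
    have hDF : ∀ x : ℝ, 0 < x → x ≤ (iT:ℝ) →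
        HasDerivAt f (P / c * (-(2*x) / (2 * Real.sqrt ((k:ℝ)^2 - x^2)))
          - T / c * (-(B * ((2:ℝ)/3 * x ^ ((2:ℝ)/3 - 1))) * ((3:ℝ)/2)
              * (A - B * x ^ ((2:ℝ)/3)) ^ ((3:ℝ)/2 - 1))) x := by
      intro x hx hxiT
      have hDx : (0:ℝ) < (k:ℝ)^2 - x^2 := hDpos x hx hxiT
      have h1 : HasDerivAt (fun s : ℝ => (k:ℝ)^2 - s^2) (-(2*x)) x := by
        simpa using (hasDerivAt_pow 2 x).const_sub ((k:ℝ)^2)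
      have h2 := h1.sqrt hDx.ne'
      have h3 : HasDerivAt (fun s : ℝ => s ^ ((2:ℝ)/3)) ((2:ℝ)/3 * x ^ ((2:ℝ)/3 - 1)) x :=
        Real.hasDerivAt_rpow_const (Or.inl hx.ne')
      have h4 := (h3.const_mul B).const_sub A
      have h5 := h4.rpow_const (p := (3:ℝ)/2) (Or.inr (by norm_num))
      rw [hf]
      exact (h2.const_mul (P/c)).sub (h5.const_mul (T/c))
    have hmono : MonotoneOn f (Set.Icc (1:ℝ) (iT:ℝ)) := by
      apply monotoneOn_of_deriv_nonneg (convex_Icc _ _)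
      · intro x hx
        exact ((hDF x (lt_of_lt_of_le one_pos hx.1) hx.2).continuousAt).continuousWithinAt
      · intro x hx
        rw [interior_Icc] at hx
        exact ((hDF x (lt_of_lt_of_le one_pos hx.1.le) hx.2.le).differentiableAt).differentiableWithinAt
      · intro x hx
        rw [interior_Icc] at hx
        rw [(hDF x (lt_of_lt_of_le one_pos hx.1.le) hx.2.le).deriv]
        exact hF0 x hx.1.le hx.2.le
    have hBn : ∀ j : ℕ, (P * (j:ℝ) / T) ^ ((2:ℝ)/3) = B * (j:ℝ) ^ ((2:ℝ)/3) := by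
      intro j
      rw [show P * (j:ℝ) / T = (P/T) * (j:ℝ) by ring,
        Real.mul_rpow (div_nonneg hPpos.le hT.le) (Nat.cast_nonneg j), hB]
    have hfI : ∀ j : ℕ, I j = m * c^2 * T + f (j:ℝ) := by
      intro j
      simp only [hI, hf]
      rw [hBn j]
      ring
    intro n hn1 hsucc
    have hm1 : ((n:ℝ)) ∈ Set.Icc (1:ℝ) (iT:ℝ) := by
      constructor
      · exact_mod_cast hn1
      · exact Nat.cast_le.mpr (by omega)
    have hm2 : ((n:ℝ) + 1) ∈ Set.Icc (1:ℝ) (iT:ℝ) := by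
      constructor
      · exact hm1.1.trans (le_add_of_nonneg_right zero_le_one)
      · have h9 : ((n+1:ℕ):ℝ) ≤ (iT:ℝ) := Nat.cast_le.mpr hsucc
        push_cast at h9
        exact h9
    have hle := hmono hm1 hm2 (le_add_of_nonneg_right zero_le_one)
    rw [hfI n, hfI (n+1)]
    push_cast
    exact add_le_add_right hle _
end
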